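/- arXiv:2006.15035 — 2 statements merged into one kernel-verified Lean document; each statement's English description precedes it below -/
import Mathlib

section
/- The scaled distribution after a Sinkhorn step satisfies the constraint and decreases KL to any feasible point: with q(x,y) = μ(x) p(x,y)/p_X(x) as above, for every distribution r on X×Y with X-marginal μ, KL(r || p) = KL(r || q) + KL(μ || p_X). In particular KL(r||p) ≥ KL(q||p) = KL(μ||p_X). -/
/-- Pythagorean identity for the Sinkhorn scaling step. -/
theorem sinkhorn_step_pythagorean
    {X Y : Type*} [Fintype X] [Fintype Y]
    (p : X × Y → ℝ) (hp : ∀ z, 0 < p z) (hpsum : ∑ z, p z = 1)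
    (μ : X → ℝ) (hμ : ∀ x, 0 < μ x) (hμsum : ∑ x, μ x = 1)
    (q : X × Y → ℝ)
    (hq : ∀ x y, q (x, y) = μ x * p (x, y) / (∑ y', p (x, y')))
    (r : X × Y → ℝ) (hr0 : ∀ z, 0 ≤ r z) (hrs : ∑ z, r z = 1)
    (hrX : ∀ x, ∑ y, r (x, y) = μ x) :
    (∑ z, r z * Real.log (r z / p z)
      = (∑ z, r z * Real.log (r z / q z))
        + ∑ x, μ x * Real.log (μ x / (∑ y, p (x, y)))) ∧
    (∑ z, q z * Real.log (q z / p z)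
      = ∑ x, μ x * Real.log (μ x / (∑ y, p (x, y)))) ∧
    (∑ z, q z * Real.log (q z / p z) ≤ ∑ z, r z * Real.log (r z / p z)) := by
  have hpXpos : ∀ x : X, 0 < ∑ y, p (x, y) := by
    intro x
    have hY : Nonempty Y := by
      by_contra h
      rw [not_nonempty_iff] at h
      have : (∑ z : X × Y, p z) = 0 := by
        apply Finset.sum_eq_zero
        intro z _
        exact (h.false z.2).elim
      linarith [hpsum]
    exact Finset.sum_pos (fun y _ => hp (x, y)) Finset.univ_nonempty
  have hqpos : ∀ z : X × Y, 0 < q z := by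
    rintro ⟨x, y⟩
    rw [hq x y]
    exact div_pos (mul_pos (hμ x) (hp (x, y))) (hpXpos x)
  -- sum of q over y is μ
  have hqY : ∀ x, ∑ y, q (x, y) = μ x := by
    intro x
    have : ∑ y, q (x, y) = (μ x / (∑ y', p (x, y'))) * ∑ y, p (x, y) := by
      rw [Finset.mul_sum]
      apply Finset.sum_congr rfl
      intro y _
      rw [hq x y]; ring
    rw [this, div_mul_cancel₀]
    exact (hpXpos x).ne'
  have hqsum : ∑ z, q z = 1 := by
    rw [Fintype.sum_prod_type]
    simp only [hqY]
    exact hμsum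
  -- q/p = μ/pX
  have hlogqp : ∀ x y, Real.log (q (x, y) / p (x, y)) = Real.log (μ x / ∑ y', p (x, y')) := by
    intro x y
    congr 1
    rw [hq x y, div_div, mul_comm (∑ y', p (x, y')) (p (x, y))]
    rw [mul_comm (μ x) (p (x, y))]
    exact mul_div_mul_left _ _ (hp (x, y)).ne'
  -- second identity
  have h2 : ∑ z, q z * Real.log (q z / p z)
      = ∑ x, μ x * Real.log (μ x / (∑ y, p (x, y))) := by
    rw [Fintype.sum_prod_type]
    apply Finset.sum_congr rfl
    intro x _
    calc ∑ y, q (x, y) * Real.log (q (x, y) / p (x, y))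
        = ∑ y, q (x, y) * Real.log (μ x / ∑ y', p (x, y')) := by
          apply Finset.sum_congr rfl; intro y _; rw [hlogqp]
      _ = (∑ y, q (x, y)) * Real.log (μ x / ∑ y', p (x, y')) := by
          rw [Finset.sum_mul]
      _ = μ x * Real.log (μ x / (∑ y, p (x, y))) := by rw [hqY]
  -- first identity
  have h1 : ∑ z, r z * Real.log (r z / p z)
      = (∑ z, r z * Real.log (r z / q z))
        + ∑ x, μ x * Real.log (μ x / (∑ y, p (x, y))) := by
    have key : ∀ z : X × Y, r z * Real.log (r z / p z)
        = r z * Real.log (r z / q z) + r z * Real.log (q z / p z) := by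
      intro z
      rcases eq_or_lt_of_le (hr0 z) with h | h
      · simp [← h]
      · have heq : (r z / q z) * (q z / p z) = r z / p z := by
          rw [div_mul_div_comm, mul_comm (q z) (p z)]
          exact mul_div_mul_right _ _ (hqpos z).ne'
        rw [← heq, Real.log_mul (div_pos h (hqpos z)).ne' (div_pos (hqpos z) (hp z)).ne']
        ring
    calc ∑ z, r z * Real.log (r z / p z)
        = ∑ z, (r z * Real.log (r z / q z) + r z * Real.log (q z / p z)) := by
          apply Finset.sum_congr rfl; intro z _; exact key z
      _ = (∑ z, r z * Real.log (r z / q z)) + ∑ z, r z * Real.log (q z / p z) := by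
          rw [Finset.sum_add_distrib]
      _ = (∑ z, r z * Real.log (r z / q z))
            + ∑ x, μ x * Real.log (μ x / (∑ y, p (x, y))) := by
          congr 1
          rw [Fintype.sum_prod_type]
          apply Finset.sum_congr rfl
          intro x _
          calc ∑ y, r (x, y) * Real.log (q (x, y) / p (x, y))
              = ∑ y, r (x, y) * Real.log (μ x / ∑ y', p (x, y')) := by
                apply Finset.sum_congr rfl; intro y _; rw [hlogqp]
            _ = (∑ y, r (x, y)) * Real.log (μ x / ∑ y', p (x, y')) := by
                rw [Finset.sum_mul]
            _ = μ x * Real.log (μ x / (∑ y, p (x, y))) := by rw [hrX]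
  refine ⟨h1, h2, ?_⟩
  -- Gibbs: ∑ r log(r/q) ≥ 0
  have hgibbs : 0 ≤ ∑ z, r z * Real.log (r z / q z) := by
    have hterm : ∀ z : X × Y, r z - q z ≤ r z * Real.log (r z / q z) := by
      intro z
      rcases eq_or_lt_of_le (hr0 z) with h | h
      · simp [← h]
        linarith [(hqpos z).le]
      · have hlog : Real.log (q z / r z) ≤ q z / r z - 1 :=
          Real.log_le_sub_one_of_pos (div_pos (hqpos z) h)
        have : Real.log (r z / q z) = -Real.log (q z / r z) := by
          rw [← Real.log_inv]
          congr 1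
          field_simp
        rw [this]
        have h2 : r z * (-(q z / r z - 1)) ≤ r z * (-Real.log (q z / r z)) := by
          apply mul_le_mul_of_nonneg_left (by linarith) h.le
        calc r z - q z = r z * (-(q z / r z - 1)) := by field_simp; ring
          _ ≤ r z * (-Real.log (q z / r z)) := h2
    calc (0 : ℝ) = ∑ z, (r z - q z) := by
          rw [Finset.sum_sub_distrib, hrs, hqsum]; ring
      _ ≤ ∑ z, r z * Real.log (r z / q z) := Finset.sum_le_sum (fun z _ => hterm z)
  rw [h1, h2]
  linarith
end

section
/- Fixed-point characterization of the constrained two-marginal problem: the minimizer of KL(q||ψ) over joint distributions q on X×Y subject to q_X = μ and q_Y = ν (ψ : X×Y → ℝ_{>0}) has the form q(x,y) = u(x) ψ(x,y) v(y) for some positive vectors u : X → ℝ_{>0} and v : Y → ℝ_{>0}. -/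
lemma sb_conv_aux {a b c t : ℝ} (ha : 0 ≤ a) (hb : 0 ≤ b) (hc : 0 < c)
    (ht0 : 0 ≤ t) (ht1 : t ≤ 1) :
    ((1-t)*a + t*b) * Real.log (((1-t)*a + t*b)/c) ≤
      (1-t) * (a * Real.log (a/c)) + t * (b * Real.log (b/c)) := by
  have key : ∀ s : ℝ, 0 ≤ s → s * Real.log (s/c) = s * Real.log s - Real.log c * s := by
    intro s hs
    rcases eq_or_lt_of_le hs with h|h
    · simp [← h]
    · rw [Real.log_div h.ne' hc.ne']; ring
  have hs : 0 ≤ (1-t)*a + t*b :=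
    add_nonneg (mul_nonneg (by linarith) ha) (mul_nonneg ht0 hb)
  rw [key _ ha, key _ hb, key _ hs]
  have hconv := Real.convexOn_mul_log.2 (Set.mem_Ici.2 ha) (Set.mem_Ici.2 hb)
    (by linarith : (0:ℝ) ≤ 1 - t) ht0 (by ring)
  simp only [smul_eq_mul] at hconv
  nlinarith [hconv]

lemma sb_term_deriv (c qz e : ℝ) (hq : 0 < qz) (hc : 0 < c) :
    HasDerivAt (fun t : ℝ => (qz + t*e) * Real.log ((qz + t*e)/c))
      (e * Real.log (qz/c) + e) 0 := by
  have hu : HasDerivAt (fun t : ℝ => qz + t*e) e 0 := by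
    simpa using ((hasDerivAt_id (0:ℝ)).mul_const e).const_add qz
  have hdiv : HasDerivAt (fun t : ℝ => (qz + t*e)/c) (e/c) 0 := hu.div_const c
  have hne : (qz + 0*e)/c ≠ 0 := by
    simp only [zero_mul, add_zero]
    positivity
  have hlog : HasDerivAt (fun t : ℝ => Real.log ((qz + t*e)/c))
      ((e/c)/((qz + 0*e)/c)) 0 := hdiv.log hne
  have hmul := hu.mul hlog
  simp only [zero_mul, add_zero] at hmul hlog ⊢
  have heq : e * Real.log (qz / c) + e = e * Real.log (qz / c) + qz * (e / c / (qz / c)) := by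
    rw [div_div_div_cancel_right₀ hc.ne']
    field_simp
  rw [heq]
  exact hmul

/-- The minimizer of the two-marginal entropic problem has Schrödinger (Sinkhorn)
product form u ψ v. -/
theorem schroedinger_structure
    {X Y : Type*} [Fintype X] [Fintype Y]
    (ψ : X × Y → ℝ) (hψ : ∀ z, 0 < ψ z)
    (μ : X → ℝ) (ν : Y → ℝ) (hμ : ∀ x, 0 < μ x) (hν : ∀ y, 0 < ν y)
    (hμs : ∑ x, μ x = 1) (hνs : ∑ y, ν y = 1)
    (q : X × Y → ℝ) (hq0 : ∀ z, 0 ≤ q z)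
    (hqX : ∀ x, ∑ y, q (x, y) = μ x) (hqY : ∀ y, ∑ x, q (x, y) = ν y)
    (hmin : ∀ r : X × Y → ℝ, (∀ z, 0 ≤ r z) → (∀ x, ∑ y, r (x, y) = μ x) →
      (∀ y, ∑ x, r (x, y) = ν y) →
      (∑ z, q z * Real.log (q z / ψ z)) ≤ ∑ z, r z * Real.log (r z / ψ z)) :
    ∃ u : X → ℝ, ∃ v : Y → ℝ, (∀ x, 0 < u x) ∧ (∀ y, 0 < v y) ∧
      ∀ x y, q (x, y) = u x * ψ (x, y) * v y := by
  classical
  -- Step 0: nonemptiness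
  have hXne : Nonempty X := by
    by_contra h
    rw [not_nonempty_iff] at h
    simp [Finset.univ_eq_empty] at hμs
  have hYne : Nonempty Y := by
    by_contra h
    rw [not_nonempty_iff] at h
    simp [Finset.univ_eq_empty] at hνs
  -- the product coupling
  set p : X × Y → ℝ := fun z => μ z.1 * ν z.2 with hp_def
  have hppos : ∀ z, 0 < p z := fun z => mul_pos (hμ z.1) (hν z.2)
  have hpX : ∀ x, ∑ y, p (x, y) = μ x := by
    intro x; simp only [hp_def]; rw [← Finset.mul_sum, hνs, mul_one]
  have hpY : ∀ y, ∑ x, p (x, y) = ν y := by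
    intro y; simp only [hp_def]; rw [← Finset.sum_mul, hμs, one_mul]
  -- Step 1: the minimizer is strictly positive
  have qpos : ∀ z, 0 < q z := by
    intro z0
    rcases (hq0 z0).lt_or_eq with h | h
    · exact h
    exfalso
    have hqz0 : q z0 = 0 := h.symm
    set A := ∑ z, q z * Real.log (q z / ψ z) with hA
    set B := ∑ z, p z * Real.log (p z / ψ z) with hB
    have keyt : ∀ t : ℝ, 0 < t → t ≤ 1 → A - B ≤ p z0 * Real.log t := by
      intro t ht ht1
      set r : X × Y → ℝ := fun z => (1-t) * q z + t * p z with hr_def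
      have hr0 : ∀ z, 0 ≤ r z := fun z =>
        add_nonneg (mul_nonneg (by linarith) (hq0 z)) (mul_nonneg ht.le (hppos z).le)
      have hrX : ∀ x, ∑ y, r (x, y) = μ x := by
        intro x
        simp only [hr_def]
        rw [Finset.sum_add_distrib, ← Finset.mul_sum, ← Finset.mul_sum, hqX, hpX]
        ring
      have hrY : ∀ y, ∑ x, r (x, y) = ν y := by
        intro y
        simp only [hr_def]
        rw [Finset.sum_add_distrib, ← Finset.mul_sum, ← Finset.mul_sum, hqY, hpY]
        ring
      have hle := hmin r hr0 hrX hrY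
      -- bound the objective at r from above
      have hbound : ∑ z, r z * Real.log (r z / ψ z)
          ≤ (1-t) * A + t * B + t * p z0 * Real.log t := by
        have hsplit : ∀ f : X × Y → ℝ,
            ∑ z, f z = ∑ z ∈ Finset.univ.erase z0, f z + f z0 := by
          intro f
          rw [Finset.sum_erase_add _ _ (Finset.mem_univ z0)]
        rw [hsplit (fun z => r z * Real.log (r z / ψ z)),
            ]
        have herase : ∑ z ∈ Finset.univ.erase z0, r z * Real.log (r z / ψ z)
            ≤ ∑ z ∈ Finset.univ.erase z0,
              ((1-t) * (q z * Real.log (q z / ψ z)) + t * (p z * Real.log (p z / ψ z))) := by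
          apply Finset.sum_le_sum
          intro z _
          exact sb_conv_aux (hq0 z) (hppos z).le (hψ z) ht.le ht1
        have hz0term : r z0 * Real.log (r z0 / ψ z0)
            = t * p z0 * Real.log t + t * (p z0 * Real.log (p z0 / ψ z0)) := by
          have hrz0 : r z0 = t * p z0 := by simp [hr_def, hqz0]
          rw [hrz0]
          have h1 : t * p z0 / ψ z0 = t * (p z0 / ψ z0) := by ring
          rw [h1, Real.log_mul ht.ne' (div_pos (hppos z0) (hψ z0)).ne', mul_add]
          ring
        have hsum2 : ∑ z ∈ Finset.univ.erase z0,
              ((1-t) * (q z * Real.log (q z / ψ z)) + t * (p z * Real.log (p z / ψ z)))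
            = (1-t) * A + t * B - t * (p z0 * Real.log (p z0 / ψ z0)) := by
          rw [Finset.sum_add_distrib, ← Finset.mul_sum, ← Finset.mul_sum,
            Finset.sum_erase_eq_sub (Finset.mem_univ z0),
            Finset.sum_erase_eq_sub (Finset.mem_univ z0), hqz0]
          simp only [zero_mul]
          ring
        rw [hz0term]
        rw [hsum2] at herase
        linarith [herase]
      have : A ≤ (1-t) * A + t * B + t * p z0 * Real.log t := le_trans hle hbound
      have h2 : t * (A - B) ≤ t * (p z0 * Real.log t) := by nlinarith
      exact le_of_mul_le_mul_left (by linarith [h2]) ht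
    -- choose t small enough for a contradiction
    set t := min (Real.exp ((A - B - 1) / p z0)) 1 with ht_def
    have ht0 : 0 < t := lt_min (Real.exp_pos _) one_pos
    have ht1 : t ≤ 1 := min_le_right _ _
    have hlt : Real.log t ≤ (A - B - 1) / p z0 := by
      calc Real.log t ≤ Real.log (Real.exp ((A - B - 1) / p z0)) :=
            Real.log_le_log ht0 (min_le_left _ _)
        _ = (A - B - 1) / p z0 := Real.log_exp _
    have hkey := keyt t ht0 ht1
    have hp0 : 0 < p z0 := hppos z0
    rw [le_div_iff₀ hp0] at hlt
    nlinarith [hlt, hkey]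
  -- Step 2: separability of log(q/ψ)
  set F : X × Y → ℝ := fun z => Real.log (q z / ψ z) with hF_def
  obtain ⟨x0⟩ := hXne
  obtain ⟨y0⟩ := hYne
  have key : ∀ x y, F (x, y) + F (x0, y0) = F (x, y0) + F (x0, y) := by
    intro x y
    by_cases hx : x = x0
    · subst hx; ring
    by_cases hy : y = y0
    · subst hy; ring
    -- perturbation direction
    set ε : X × Y → ℝ := fun z =>
      (if z = (x, y) then (1:ℝ) else 0) + (if z = (x0, y0) then 1 else 0)
      - (if z = (x, y0) then 1 else 0) - (if z = (x0, y) then 1 else 0) with hε_def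
    set δ := min (min (q (x, y)) (q (x0, y0))) (min (q (x, y0)) (q (x0, y))) with hδ_def
    have hδpos : 0 < δ :=
      lt_min (lt_min (qpos _) (qpos _)) (lt_min (qpos _) (qpos _))
    -- nonnegativity of the perturbed plans
    have hnonneg : ∀ t : ℝ, |t| < δ → ∀ z, 0 ≤ q z + t * ε z := by
      intro t ht z
      obtain ⟨a, b⟩ := z
      obtain ⟨ht1, ht2⟩ := abs_lt.mp ht
      have hd1 : δ ≤ q (x, y) := le_trans (min_le_left _ _) (min_le_left _ _)
      have hd2 : δ ≤ q (x0, y0) := le_trans (min_le_left _ _) (min_le_right _ _)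
      have hd3 : δ ≤ q (x, y0) := le_trans (min_le_right _ _) (min_le_left _ _)
      have hd4 : δ ≤ q (x0, y) := le_trans (min_le_right _ _) (min_le_right _ _)
      rcases eq_or_ne (a, b) (x, y) with h1 | h1
      · rw [h1]
        have n2 : (x, y) ≠ (x0, y0) := by simp [Prod.ext_iff, hx]
        have n3 : (x, y) ≠ (x, y0) := by simp [Prod.ext_iff, hy]
        have n4 : (x, y) ≠ (x0, y) := by simp [Prod.ext_iff, hx]
        simp [hε_def, n2, n3, n4]
        linarith
      rcases eq_or_ne (a, b) (x0, y0) with h2 | h2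
      · rw [h2]
        have n1 : (x0, y0) ≠ (x, y) := by simp [Prod.ext_iff, Ne.symm hx]
        have n3 : (x0, y0) ≠ (x, y0) := by simp [Prod.ext_iff, Ne.symm hx]
        have n4 : (x0, y0) ≠ (x0, y) := by simp [Prod.ext_iff, Ne.symm hy]
        simp [hε_def, n1, n3, n4]
        linarith
      rcases eq_or_ne (a, b) (x, y0) with h3 | h3
      · rw [h3]
        have n1 : (x, y0) ≠ (x, y) := by simp [Prod.ext_iff, Ne.symm hy]
        have n2 : (x, y0) ≠ (x0, y0) := by simp [Prod.ext_iff, hx]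
        have n4 : (x, y0) ≠ (x0, y) := by simp [Prod.ext_iff, hx]
        simp [hε_def, n1, n2, n4]
        linarith
      rcases eq_or_ne (a, b) (x0, y) with h4 | h4
      · rw [h4]
        have n1 : (x0, y) ≠ (x, y) := by simp [Prod.ext_iff, Ne.symm hx]
        have n2 : (x0, y) ≠ (x0, y0) := by simp [Prod.ext_iff, hy]
        have n3 : (x0, y) ≠ (x, y0) := by simp [Prod.ext_iff, Ne.symm hx]
        simp [hε_def, n1, n2, n3]
        linarith
      · simp only [hε_def, if_neg h1, if_neg h2, if_neg h3, if_neg h4]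
        have := hq0 (a, b)
        linarith
    -- marginals of ε vanish
    have hsumX : ∀ (c : X) (d : Y) (a : X),
        (∑ b, if (a, b) = (c, d) then (1:ℝ) else 0) = if a = c then 1 else 0 := by
      intro c d a
      rcases eq_or_ne a c with h | h
      · subst h
        simp [Prod.ext_iff]
      · simp [Prod.ext_iff, h]
    have hsumY : ∀ (c : X) (d : Y) (b : Y),
        (∑ a, if (a, b) = (c, d) then (1:ℝ) else 0) = if b = d then 1 else 0 := by
      intro c d b
      rcases eq_or_ne b d with h | h
      · subst h
        simp [Prod.ext_iff]
      · simp [Prod.ext_iff, h]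
    have hεX : ∀ a, ∑ b, ε (a, b) = 0 := by
      intro a
      simp only [hε_def]
      rw [Finset.sum_sub_distrib, Finset.sum_sub_distrib, Finset.sum_add_distrib,
        hsumX x y a, hsumX x0 y0 a, hsumX x y0 a, hsumX x0 y a]
      ring
    have hεY : ∀ b, ∑ a, ε (a, b) = 0 := by
      intro b
      simp only [hε_def]
      rw [Finset.sum_sub_distrib, Finset.sum_sub_distrib, Finset.sum_add_distrib,
        hsumY x y b, hsumY x0 y0 b, hsumY x y0 b, hsumY x0 y b]
      ring
    -- the perturbed objective
    set g : ℝ → ℝ := fun t => ∑ z, (q z + t * ε z) * Real.log ((q z + t * ε z) / ψ z)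
      with hg_def
    have hlocal : IsLocalMin g 0 := by
      have hmem : Metric.ball (0:ℝ) δ ∈ nhds (0:ℝ) := Metric.ball_mem_nhds 0 hδpos
      filter_upwards [hmem] with t ht
      rw [Metric.mem_ball, Real.dist_eq, sub_zero] at ht
      have hfeas := hnonneg t ht
      have hrX : ∀ a, ∑ b, (q (a, b) + t * ε (a, b)) = μ a := by
        intro a
        rw [Finset.sum_add_distrib, hqX, ← Finset.mul_sum, hεX, mul_zero, add_zero]
      have hrY : ∀ b, ∑ a, (q (a, b) + t * ε (a, b)) = ν b := by
        intro b
        rw [Finset.sum_add_distrib, hqY, ← Finset.mul_sum, hεY, mul_zero, add_zero]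
      have := hmin (fun z => q z + t * ε z) hfeas hrX hrY
      have hg0 : g 0 = ∑ z, q z * Real.log (q z / ψ z) := by
        simp [hg_def]
      rw [hg0]
      exact this
    have hD : HasDerivAt g (∑ z, (ε z * Real.log (q z / ψ z) + ε z)) 0 := by
      apply HasDerivAt.fun_sum
      intro z _
      exact sb_term_deriv (ψ z) (q z) (ε z) (qpos z) (hψ z)
    have hzero := hlocal.hasDerivAt_eq_zero hD
    -- evaluate the sum
    have hsumval : ∑ z, (ε z * Real.log (q z / ψ z) + ε z)
        = F (x, y) + F (x0, y0) - F (x, y0) - F (x0, y) := by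
      have hpt : ∀ z : X × Y, ε z * Real.log (q z / ψ z) + ε z
          = (if z = (x, y) then F z + 1 else 0) + (if z = (x0, y0) then F z + 1 else 0)
            - (if z = (x, y0) then F z + 1 else 0) - (if z = (x0, y) then F z + 1 else 0) := by
        intro z
        simp only [hε_def, hF_def]
        split_ifs <;> ring
      rw [Finset.sum_congr rfl fun z _ => hpt z]
      rw [Finset.sum_sub_distrib, Finset.sum_sub_distrib, Finset.sum_add_distrib]
      simp only [Finset.sum_ite_eq', Finset.mem_univ, if_true]
      ring
    rw [hsumval] at hzero
    linarith
  -- Step 3: assemble u and v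
  refine ⟨fun x => Real.exp (F (x, y0)), fun y => Real.exp (F (x0, y) - F (x0, y0)),
    fun x => Real.exp_pos _, fun y => Real.exp_pos _, fun x y => ?_⟩
  have hFxy : F (x, y) = F (x, y0) + (F (x0, y) - F (x0, y0)) := by
    have := key x y; linarith
  have hq : q (x, y) = ψ (x, y) * Real.exp (F (x, y)) := by
    simp only [hF_def]
    rw [Real.exp_log (div_pos (qpos (x, y)) (hψ (x, y))),
      mul_div_assoc' , mul_comm, mul_div_assoc, div_self (hψ (x, y)).ne', mul_one]
  rw [hq, hFxy, Real.exp_add]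
  ring
end
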